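/- Fix a field F and an integer d >= 1. Let B be a family of (d+1)-element subsets of a finite vertex set (i.e., a family of d-simplices), and suppose |B| = binom(x+1, d+1) for a real number x >= d. Then the rank over F of the set of boundaries { ∂σ : σ ∈ B } is at least binom(x, d), where binom with real top argument denotes the generalized binomial coefficient x(x-1)...(x-d+1)/d! and ∂σ is the simplicial boundary of σ. -/

import Mathlib

open Finset Polynomial

set_option maxHeartbeats 1000000
set_option synthInstance.maxHeartbeats 400000

noncomputable def pe (k : ℕ) (t : ℝ) : ℝ := (descPochhammer ℝ k).eval t
noncomputable def pd (k : ℕ) (t : ℝ) : ℝ := (descPochhammer ℝ k).derivative.eval t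

lemma pe_succ (k : ℕ) (t : ℝ) : pe (k+1) t = pe k t * (t - k) := by
  simp [pe, descPochhammer_succ_right, eval_mul]

lemma pe_succ_left (k : ℕ) (t : ℝ) : pe (k+1) t = t * pe k (t - 1) := by
  simp [pe, descPochhammer_succ_left, eval_comp]

lemma pe_zero (t : ℝ) : pe 0 t = 1 := by simp [pe]

lemma pe_one (t : ℝ) : pe 1 t = t := by simp [pe]

lemma pe_eq_prod (k : ℕ) (t : ℝ) : pe k t = ∏ i ∈ range k, (t - i) := by
  induction k with
  | zero => simp [pe]
  | succ k ih => rw [pe_succ, ih, prod_range_succ]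

lemma pe_pos {k : ℕ} {t : ℝ} (h : (k:ℝ) - 1 < t) : 0 < pe k t := by
  rw [pe_eq_prod]
  apply Finset.prod_pos
  intro i hi
  have h2 : (i:ℝ) + 1 ≤ (k:ℝ) := by exact_mod_cast mem_range.mp hi
  linarith

lemma pe_nonneg {k : ℕ} {t : ℝ} (h : (k:ℝ) - 1 ≤ t) : 0 ≤ pe k t := by
  rw [pe_eq_prod]
  apply Finset.prod_nonneg
  intro i hi
  have h2 : (i:ℝ) + 1 ≤ (k:ℝ) := by exact_mod_cast mem_range.mp hi
  linarith

lemma pe_ge_one {k : ℕ} {t : ℝ} (h : (k:ℝ) ≤ t) : 1 ≤ pe k t := by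
  rw [pe_eq_prod]
  have : ∏ i ∈ range k, (1:ℝ) ≤ ∏ i ∈ range k, (t - i) := by
    apply Finset.prod_le_prod
    · intro i hi; norm_num
    · intro i hi
      have h2 : (i:ℝ) + 1 ≤ (k:ℝ) := by exact_mod_cast mem_range.mp hi
      linarith
  simpa using this

lemma pe_strictMonoOn (k : ℕ) (hk : 1 ≤ k) :
    StrictMonoOn (pe k) (Set.Ici ((k:ℝ) - 1)) := by
  induction k with
  | zero => omega
  | succ k ih =>
    rcases Nat.eq_or_lt_of_le hk with h1 | h1
    · intro t1 h1' t2 h2' hlt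
      have hk0 : k = 0 := by omega
      subst hk0
      simpa [pe_one] using hlt
    · have hk' : 1 ≤ k := by omega
      intro t1 ht1 t2 ht2 hlt
      simp only [Set.mem_Ici] at ht1 ht2
      push_cast at ht1 ht2
      rw [pe_succ, pe_succ]
      have h1 : 0 < pe k t1 := pe_pos (by push_cast; linarith)
      have h2 : pe k t1 ≤ pe k t2 := le_of_lt
        (ih hk' (by simp only [Set.mem_Ici]; push_cast; linarith)
          (by simp only [Set.mem_Ici]; push_cast; linarith) hlt)
      have h3 : t1 - k < t2 - k := by linarith
      have h4 : (0:ℝ) ≤ t1 - k := by linarith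
      nlinarith

lemma pe_pascal (k : ℕ) (t : ℝ) : pe (k+1) (t+1) = pe (k+1) t + (k+1) * pe k t := by
  have h1 : pe (k+1) (t+1) = (t+1) * pe k t := by
    rw [pe_succ_left]; ring_nf
  have h2 : pe (k+1) t = pe k t * (t - k) := pe_succ k t
  rw [h1, h2]; ring

lemma pe_self (k : ℕ) : pe k (k : ℝ) = (Nat.factorial k : ℝ) := by
  have := descPochhammer_eval_eq_descFactorial ℝ k k
  rw [pe, this, Nat.descFactorial_self]

lemma pe_root (k : ℕ) (hk : 1 ≤ k) : pe k ((k:ℝ) - 1) = 0 := by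
  rw [pe_eq_prod]
  apply Finset.prod_eq_zero (i := k - 1)
  · exact mem_range.mpr (by omega)
  · have : ((k - 1 : ℕ) : ℝ) = (k:ℝ) - 1 := by
      have : (1:ℕ) ≤ k := hk
      push_cast [Nat.cast_sub this]
      ring
    rw [this]; ring

lemma pd_eval (k : ℕ) {u : ℝ} (h : (k:ℝ) - 1 < u) :
    pd k u = pe k u * ∑ i ∈ range k, (u - i)⁻¹ := by
  induction k with
  | zero => simp [pd, pe]
  | succ k ih =>
    have hu : (k:ℝ) - 1 < u := by push_cast at h ⊢; linarith
    have huk : (k:ℝ) < u := by push_cast at h; linarith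
    have hne : u - k ≠ 0 := by intro hc; rw [sub_eq_zero] at hc; rw [hc] at huk; linarith
    have hd : pd (k+1) u = pd k u * (u - k) + pe k u := by
      simp [pd, pe, descPochhammer_succ_right, derivative_mul, eval_mul, eval_add]
      try ring
    rw [hd, ih hu, pe_succ, sum_range_succ]
    field_simp

lemma pd_pos {k : ℕ} (hk : 1 ≤ k) {u : ℝ} (h : (k:ℝ) - 1 < u) : 0 < pd k u := by
  rw [pd_eval k h]
  apply mul_pos (pe_pos h)
  apply Finset.sum_pos
  · intro i hi
    have h2 : (i:ℝ) + 1 ≤ (k:ℝ) := by exact_mod_cast mem_range.mp hi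
    have : (0:ℝ) < u - i := by linarith
    positivity
  · exact nonempty_range_iff.mpr (by omega)

lemma pe_pd_ratio_mono {k : ℕ} (hk : 1 ≤ k) {u1 u2 : ℝ}
    (h1 : (k:ℝ) - 1 < u1) (h12 : u1 ≤ u2) :
    pe k u1 * pd k u2 ≤ pe k u2 * pd k u1 := by
  have h2 : (k:ℝ) - 1 < u2 := lt_of_lt_of_le h1 h12
  rw [pd_eval k h1, pd_eval k h2]
  have hs : ∑ i ∈ range k, (u2 - i)⁻¹ ≤ ∑ i ∈ range k, (u1 - i)⁻¹ := by
    apply Finset.sum_le_sum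
    intro i hi
    have hik : (i:ℝ) + 1 ≤ (k:ℝ) := by exact_mod_cast mem_range.mp hi
    have hp1 : (0:ℝ) < u1 - i := by linarith
    have hp2 : (0:ℝ) < u2 - i := by linarith
    exact inv_anti₀ hp1 (by linarith)
  have p1 : 0 < pe k u1 := pe_pos h1
  have p2 : 0 < pe k u2 := pe_pos h2
  calc pe k u1 * (pe k u2 * ∑ i ∈ range k, (u2 - i)⁻¹)
      ≤ pe k u1 * (pe k u2 * ∑ i ∈ range k, (u1 - i)⁻¹) := by
        apply mul_le_mul_of_nonneg_left _ (le_of_lt p1)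
        exact mul_le_mul_of_nonneg_left hs (le_of_lt p2)
    _ = pe k u2 * (pe k u1 * ∑ i ∈ range k, (u1 - i)⁻¹) := by ring

lemma pd_succ_eval (k : ℕ) (s : ℝ) : pd (k+1) s = pe k (s-1) + s * pd k (s-1) := by
  have : (descPochhammer ℝ (k+1)).derivative
      = (descPochhammer ℝ k).comp (X - 1)
        + X * ((descPochhammer ℝ k).derivative.comp (X - 1)) := by
    rw [descPochhammer_succ_left, derivative_mul, derivative_X, one_mul, derivative_comp]
    simp [mul_comm]
  rw [pd, this]
  simp [pd, pe, eval_comp]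

lemma pd_pd_ratio_mono {k : ℕ} (hk : 1 ≤ k) {s1 s2 : ℝ}
    (h1 : (k:ℝ) < s1) (h12 : s1 ≤ s2) :
    pd (k+1) s1 * pd k (s2 - 1) ≤ pd (k+1) s2 * pd k (s1 - 1) := by
  have h1' : (k:ℝ) - 1 < s1 - 1 := by linarith
  have h2' : (k:ℝ) - 1 < s2 - 1 := by linarith
  have hp1 : 0 < pd k (s1 - 1) := pd_pos hk h1'
  have hp2 : 0 < pd k (s2 - 1) := pd_pos hk h2'
  rw [pd_succ_eval, pd_succ_eval]
  have key : pe k (s1 - 1) * pd k (s2 - 1) ≤ pe k (s2 - 1) * pd k (s1 - 1) :=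
    pe_pd_ratio_mono hk h1' (by linarith)
  nlinarith [mul_pos hp1 hp2]

noncomputable def concF (n : ℕ) (A d : ℝ) (s : ℝ) : ℝ := A * pe (n+1) (s-1) - d * pe (n+2) s
noncomputable def concF' (n : ℕ) (A d : ℝ) (s : ℝ) : ℝ := A * pd (n+1) (s-1) - d * pd (n+2) s

lemma concF_hasDeriv (n : ℕ) (A d s : ℝ) : HasDerivAt (concF n A d) (concF' n A d s) s := by
  have h1 : HasDerivAt (fun s : ℝ => pe (n+1) (s-1)) (pd (n+1) (s-1)) s := by
    have hp := Polynomial.hasDerivAt (descPochhammer ℝ (n+1)) (s-1)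
    have hg : HasDerivAt (fun s : ℝ => s - 1) 1 s := (hasDerivAt_id s).sub_const 1
    have := HasDerivAt.comp s hp hg
    simp only [mul_one] at this; exact this
  have h2 : HasDerivAt (fun s : ℝ => pe (n+2) s) (pd (n+2) s) s :=
    Polynomial.hasDerivAt _ s
  exact (h1.const_mul A).sub (h2.const_mul d)

lemma pe_conc (n : ℕ) {t1 t t2 : ℝ} (h0 : (n:ℝ)+1 ≤ t1) (h1 : t1 ≤ t) (h2 : t ≤ t2) :
    pe (n+1) (t1-1) * (pe (n+2) t2 - pe (n+2) t)
      + pe (n+1) (t2-1) * (pe (n+2) t - pe (n+2) t1)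
      ≤ pe (n+1) (t-1) * (pe (n+2) t2 - pe (n+2) t1) := by
  rcases eq_or_lt_of_le h1 with rfl | h1'
  · rw [sub_self, mul_zero, add_zero]
  rcases eq_or_lt_of_le h2 with rfl | h2'
  · rw [sub_self, mul_zero, zero_add]
  set A := pe (n+2) t2 - pe (n+2) t1 with hA
  set d := pe (n+1) (t2-1) - pe (n+1) (t1-1) with hd
  have ht12 : t1 < t2 := lt_trans h1' h2'
  have hApos : 0 < A := by
    rw [hA]
    apply sub_pos.mpr
    apply pe_strictMonoOn (n+2) (by omega) _ _ ht12 <;>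
      · simp only [Set.mem_Ici]; push_cast; linarith
  have hdpos : 0 < d := by
    rw [hd]
    apply sub_pos.mpr
    apply pe_strictMonoOn (n+1) (by omega) _ _ (by linarith : t1 - 1 < t2 - 1) <;>
      · simp only [Set.mem_Ici]; push_cast; linarith
  by_contra hcon
  push_neg at hcon
  have hid : concF n A d t - concF n A d t1
      = pe (n+1) (t-1) * A - (pe (n+1) (t1-1) * (pe (n+2) t2 - pe (n+2) t)
        + pe (n+1) (t2-1) * (pe (n+2) t - pe (n+2) t1)) := by
    simp only [concF, hA, hd]; ring
  have hftt1 : concF n A d t < concF n A d t1 := by linarith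
  have hft2 : concF n A d t2 = concF n A d t1 := by
    simp only [concF, hA, hd]; ring
  have hcont : ∀ a b : ℝ, ContinuousOn (concF n A d) (Set.Icc a b) :=
    fun a b => fun x _ => (concF_hasDeriv n A d x).continuousAt.continuousWithinAt
  obtain ⟨p, hp, hps⟩ := exists_hasDerivAt_eq_slope (concF n A d) (concF' n A d) h1'
    (hcont t1 t) (fun x _ => concF_hasDeriv n A d x)
  obtain ⟨q, hq, hqs⟩ := exists_hasDerivAt_eq_slope (concF n A d) (concF' n A d) h2'
    (hcont t t2) (fun x _ => concF_hasDeriv n A d x)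
  have hpneg : concF' n A d p < 0 := by
    rw [hps]
    apply div_neg_of_neg_of_pos (by linarith) (by linarith [hp.1, hp.2])
  have hqpos : 0 < concF' n A d q := by
    rw [hqs, hft2]
    apply div_pos (by linarith) (by linarith [hq.1, hq.2])
  simp only [concF'] at hpneg hqpos
  have hpgt : (n:ℝ) + 1 < p := lt_of_le_of_lt h0 hp.1
  have hpq : p < q := lt_trans hp.2 hq.1
  have hratio := pd_pd_ratio_mono (k := n+1) (by omega)
    (by push_cast; linarith : ((n+1 : ℕ):ℝ) < p) (le_of_lt hpq)
  have hpd1 : 0 < pd (n+1) (p - 1) := pd_pos (by omega) (by push_cast; linarith)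
  have hpd2 : 0 < pd (n+1) (q - 1) := pd_pos (by omega) (by push_cast; linarith)
  nlinarith [mul_lt_mul_of_pos_right hpneg hpd2,
    mul_lt_mul_of_pos_right hqpos hpd1,
    mul_le_mul_of_nonneg_left hratio (le_of_lt hdpos)]

noncomputable def bk (k : ℕ) (t : ℝ) : ℝ := pe k t / (Nat.factorial k : ℝ)

lemma fact_pos' (k : ℕ) : (0:ℝ) < (Nat.factorial k : ℝ) := by
  exact_mod_cast Nat.factorial_pos k

lemma bk_zero (t : ℝ) : bk 0 t = 1 := by simp [bk, pe]

lemma bk_nonneg {k : ℕ} {t : ℝ} (h : (k:ℝ) - 1 ≤ t) : 0 ≤ bk k t :=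
  div_nonneg (pe_nonneg h) (le_of_lt (fact_pos' k))

lemma bk_pos {k : ℕ} {t : ℝ} (h : (k:ℝ) - 1 < t) : 0 < bk k t :=
  div_pos (pe_pos h) (fact_pos' k)

lemma bk_le_bk {k : ℕ} (hk : 1 ≤ k) {t1 t2 : ℝ} (h1 : (k:ℝ) - 1 ≤ t1) (h12 : t1 ≤ t2) :
    bk k t1 ≤ bk k t2 := by
  apply div_le_div_of_nonneg_right _ (fact_pos' k).le
  rcases eq_or_lt_of_le h12 with rfl | hlt
  · exact le_refl _
  · exact le_of_lt (pe_strictMonoOn k hk (Set.mem_Ici.mpr h1)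
      (Set.mem_Ici.mpr (le_trans h1 h12)) hlt)

lemma bk_lt_bk {k : ℕ} (hk : 1 ≤ k) {t1 t2 : ℝ} (h1 : (k:ℝ) - 1 ≤ t1) (h12 : t1 < t2) :
    bk k t1 < bk k t2 := by
  apply div_lt_div_of_pos_right _ (fact_pos' k)
  exact pe_strictMonoOn k hk (Set.mem_Ici.mpr h1)
    (Set.mem_Ici.mpr (le_trans h1 (le_of_lt h12))) h12

lemma bk_pascal (k : ℕ) (t : ℝ) : bk (k+1) (t+1) = bk (k+1) t + bk k t := by
  have h := pe_pascal k t
  have h1 : (Nat.factorial (k+1) : ℝ) = (k+1) * (Nat.factorial k) := by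
    rw [Nat.factorial_succ]; push_cast; ring
  simp only [bk, h, h1]
  have := fact_pos' k
  field_simp

lemma bk_self (k : ℕ) : bk k (k:ℝ) = 1 := by
  rw [bk, pe_self]
  exact div_self (ne_of_gt (fact_pos' k))

lemma bk_root (k : ℕ) (hk : 1 ≤ k) : bk k ((k:ℝ) - 1) = 0 := by
  rw [bk, pe_root k hk, zero_div]

lemma bk_conc (n : ℕ) {t1 t t2 : ℝ} (h0 : (n:ℝ)+1 ≤ t1) (h1 : t1 ≤ t) (h2 : t ≤ t2) :
    bk (n+1) (t1-1) * (bk (n+2) t2 - bk (n+2) t)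
      + bk (n+1) (t2-1) * (bk (n+2) t - bk (n+2) t1)
      ≤ bk (n+1) (t-1) * (bk (n+2) t2 - bk (n+2) t1) := by
  have hpe := pe_conc n h0 h1 h2
  have c1 := fact_pos' (n+1)
  have c2 := fact_pos' (n+2)
  simp only [bk]
  rw [div_sub_div_same, div_sub_div_same, div_sub_div_same, div_mul_div_comm,
    div_mul_div_comm, div_mul_div_comm, ← add_div]
  exact div_le_div_of_nonneg_right hpe (by positivity)

lemma bk_surj (k : ℕ) (hk : 1 ≤ k) {s : ℝ} (hs : 0 ≤ s) :
    ∃ t : ℝ, (k:ℝ) - 1 ≤ t ∧ bk k t = s := by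
  obtain ⟨k', rfl⟩ : ∃ k', k = k' + 1 := ⟨k - 1, by omega⟩
  set M := s * (Nat.factorial (k'+1) : ℝ) with hM
  have hM0 : 0 ≤ M := mul_nonneg hs (le_of_lt (fact_pos' _))
  set T := ((k'+1 : ℕ) : ℝ) + M with hT
  have hkT : ((k'+1:ℕ):ℝ) ≤ T := by rw [hT]; linarith
  have hpeT : M ≤ pe (k'+1) T := by
    have hge : 1 ≤ pe k' T := pe_ge_one (by push_cast at hkT ⊢; linarith)
    have : pe (k'+1) T = pe k' T * (T - k') := pe_succ k' T
    rw [this]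
    have hTk : M + 1 ≤ T - k' := by rw [hT]; push_cast; linarith
    nlinarith
  have hroot : pe (k'+1) (((k'+1:ℕ):ℝ) - 1) = 0 := pe_root (k'+1) (by omega)
  have hcont : ContinuousOn (fun t => pe (k'+1) t)
      (Set.Icc (((k'+1:ℕ):ℝ) - 1) T) :=
    ((descPochhammer ℝ (k'+1)).continuous_aeval).continuousOn
  have hmem : M ∈ Set.Icc (pe (k'+1) (((k'+1:ℕ):ℝ) - 1)) (pe (k'+1) T) := by
    rw [hroot]; exact ⟨hM0, hpeT⟩
  have hsub := intermediate_value_Icc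
    (by push_cast at hkT ⊢; linarith : ((k'+1:ℕ):ℝ) - 1 ≤ T) hcont
  obtain ⟨t, ht, hpe⟩ := hsub hmem
  refine ⟨t, ht.1, ?_⟩
  have hpe' : pe (k'+1) t = M := hpe
  rw [bk, hpe', hM]
  field_simp

lemma lemmaN (e : ℕ) {x y z : ℝ} (hx : (e:ℝ)+1 ≤ x) (hy : (e:ℝ) ≤ y) (hyx : y + 1 ≤ x)
    (hz : (e:ℝ) ≤ z)
    (heq : bk (e+1) (y+1) + bk (e+2) (z+1) = bk (e+2) (x+1)) :
    bk (e+1) x ≤ bk e y + bk (e+1) z := by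
  have hp1 : bk (e+2) (x+1) = bk (e+2) x + bk (e+1) x := bk_pascal (e+1) x
  have hp2 : bk (e+1) x = bk (e+1) (x-1) + bk e (x-1) := by
    have h := bk_pascal e (x-1)
    rw [sub_add_cancel] at h
    exact h
  have hposx : 0 < bk (e+1) x := bk_pos (by push_cast; linarith)
  rcases le_or_gt x z with hzx | hzx
  · have h1 : bk (e+1) x ≤ bk (e+1) z := bk_le_bk (by omega) (by push_cast; linarith) hzx
    have h2 : 0 ≤ bk e y := bk_nonneg (by push_cast; linarith)
    linarith
  · -- z < x
    have hx1 : x ≤ z + 1 := by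
      by_contra hcon
      push_neg at hcon
      have hlt : bk (e+2) (z+1) < bk (e+2) x :=
        bk_lt_bk (by omega) (by push_cast; linarith) hcon
      have hyx' : bk (e+1) (y+1) ≤ bk (e+1) x :=
        bk_le_bk (by omega) (by push_cast; linarith) hyx
      linarith
    have hA : bk e (x-1) * bk (e+1) (y+1) ≤ bk e y * bk (e+1) x := by
      match e, hy, hx with
      | 0, hy, hx =>
        simp only [bk_zero, one_mul]
        exact bk_le_bk (by omega) (by norm_num; linarith) hyx
      | (e'+1), hy, hx =>
        have hy' : ((e':ℝ)+1) ≤ y := by push_cast at hy; linarith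
        have hconc := bk_conc e' (t1 := ((e':ℝ)+1)) (t := y+1) (t2 := x)
          (by linarith) (by linarith) (by linarith)
        have hz1 : bk (e'+1) (((e':ℝ)+1) - 1) = 0 := by
          have h := bk_root (e'+1) (by omega)
          push_cast at h ⊢
          convert h using 2
          try ring
        have hz2 : bk (e'+2) ((e':ℝ)+1) = 0 := by
          have h := bk_root (e'+2) (by omega)
          push_cast at h ⊢
          convert h using 2
          try ring
        rw [hz1, hz2, zero_mul, zero_add, sub_zero, sub_zero, add_sub_cancel_right] at hconc
        push_cast
        exact hconc
    have hB := bk_conc e (t1 := x) (t := z+1) (t2 := x+1)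
      (by linarith) hx1 (by linarith)
    rw [add_sub_cancel_right] at hB
    rw [show z + 1 - 1 = z from by ring] at hB
    have ha : bk (e+2) (x+1) - bk (e+2) (z+1) = bk (e+1) (y+1) := by linarith
    have hb : bk (e+2) (z+1) - bk (e+2) x = bk (e+1) x - bk (e+1) (y+1) := by linarith
    have hrhs : bk (e+2) (x+1) - bk (e+2) x = bk (e+1) x := by linarith
    rw [ha, hb, hrhs] at hB
    have hp2a : bk (e+1) x * bk (e+1) (y+1)
        = bk (e+1) (x-1) * bk (e+1) (y+1) + bk e (x-1) * bk (e+1) (y+1) := by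
      rw [hp2]; ring
    have hB2 : bk (e+1) (x-1) * bk (e+1) (y+1)
        + bk (e+1) x * bk (e+1) x - bk (e+1) x * bk (e+1) (y+1)
        ≤ bk (e+1) z * bk (e+1) x := by nlinarith [hB]
    have hsum : bk (e+1) x * bk (e+1) x ≤ (bk e y + bk (e+1) z) * bk (e+1) x := by
      nlinarith [hA, hB2, hp2a]
    exact (mul_le_mul_iff_of_pos_right hposx).mp hsum



/-- The simplicial boundary of a simplex `σ` (a finite set of vertices from a linearly
ordered vertex set), as an element of the free `F`-vector space on the set of all
simplices: if `σ = [v_0, …, v_d]` with `v_0 < ⋯ < v_d`, then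
`∂σ = ∑ⱼ (-1)ʲ [v_0, …, v̂_j, …, v_d]`. -/
noncomputable def sbdry (F : Type) [Field F] {V : Type} [LinearOrder V]
    (σ : Finset V) : (Finset V) →₀ F :=
  ∑ v ∈ σ, ((-1 : F) ^ ((σ.filter (fun w => w < v)).card)) •
    Finsupp.single (σ.erase v) (1 : F)

/-- `c` is a `d`-cycle over `F`: an `F`-linear combination of `d`-simplices
(i.e. `(d+1)`-element vertex sets) whose boundary is `0`. -/
def IsCycle (F : Type) [Field F] {V : Type} [LinearOrder V] (d : ℕ)
    (c : (Finset V) →₀ F) : Prop :=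
  (∀ σ ∈ c.support, σ.card = d + 1) ∧ ∑ σ ∈ c.support, c σ • sbdry F σ = 0

/-- A nontrivial `d`-cycle is simple if its support does not strictly contain the
support of any other nontrivial `d`-cycle. -/
def IsSimpleCycle (F : Type) [Field F] {V : Type} [LinearOrder V] (d : ℕ)
    (c : (Finset V) →₀ F) : Prop :=
  IsCycle F d c ∧ c ≠ 0 ∧
    ∀ c' : (Finset V) →₀ F, IsCycle F d c' → c' ≠ 0 → c'.support ⊆ c.support →
      c'.support = c.support

/-- The rank over `F` of a finite set `A` of `d`-simplices: the dimension of the span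
of the boundaries of the members of `A`. -/
noncomputable def rankBd (F : Type) [Field F] {V : Type} [LinearOrder V]
    (A : Finset (Finset V)) : ℕ :=
  Module.finrank F (Submodule.span F ((fun σ => sbdry F σ) '' (↑A : Set (Finset V))))

section LA'

variable (F : Type) [Field F] {V : Type} [LinearOrder V]

noncomputable def Qm (v : V) : (Finset V →₀ F) →ₗ[F] (Finset V →₀ F) :=
  Finsupp.lsum F (fun τ => if v ∈ τ then Finsupp.lsingle (τ.erase v) else 0)

noncomputable def Pm (v : V) : (Finset V →₀ F) →ₗ[F] (Finset V →₀ F) :=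
  Finsupp.lsum F (fun τ => if v ∈ τ then 0 else Finsupp.lsingle τ)

lemma Qm_single (v : V) (τ : Finset V) (c : F) :
    Qm F v (Finsupp.single τ c)
      = if v ∈ τ then Finsupp.single (τ.erase v) c else 0 := by
  simp only [Qm, Finsupp.lsum_single]
  split_ifs <;> simp

lemma Pm_single (v : V) (τ : Finset V) (c : F) :
    Pm F v (Finsupp.single τ c)
      = if v ∈ τ then 0 else Finsupp.single τ c := by
  simp only [Pm, Finsupp.lsum_single]
  split_ifs <;> simp

lemma Qm_sbdry_mem {v : V} {σ : Finset V} (hv : v ∈ σ) (hmax : ∀ w ∈ σ, w ≤ v) :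
    Qm F v (sbdry F σ) = sbdry F (σ.erase v) := by
  unfold sbdry
  rw [map_sum, ← Finset.add_sum_erase _ _ hv]
  have hvterm : Qm F v (((-1 : F) ^ ((σ.filter (fun w => w < v)).card)) •
      Finsupp.single (σ.erase v) (1 : F)) = 0 := by
    rw [map_smul, Qm_single, if_neg (Finset.notMem_erase v σ), smul_zero]
  rw [hvterm, zero_add]
  apply Finset.sum_congr rfl
  intro w hw
  obtain ⟨hwne, hwσ⟩ := Finset.mem_erase.mp hw
  rw [map_smul, Qm_single, if_pos (Finset.mem_erase.mpr ⟨Ne.symm hwne, hv⟩)]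
  have h1 : (σ.erase v).filter (fun u => u < w) = σ.filter (fun u => u < w) := by
    rw [Finset.filter_erase]
    apply Finset.erase_eq_of_notMem
    simp only [Finset.mem_filter, not_and]
    intro _
    exact not_lt.mpr (hmax w hwσ)
  have h2 : (σ.erase w).erase v = (σ.erase v).erase w := Finset.erase_right_comm
  rw [h1, h2]

lemma Qm_sbdry_not_mem {v : V} {σ : Finset V} (hv : v ∉ σ) :
    Qm F v (sbdry F σ) = 0 := by
  unfold sbdry
  rw [map_sum]
  apply Finset.sum_eq_zero
  intro w hw
  rw [map_smul, Qm_single, if_neg (fun hc => hv (Finset.mem_of_mem_erase hc)), smul_zero]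

lemma Pm_sbdry_mem {d : ℕ} {v : V} {σ : Finset V} (hv : v ∈ σ) (hmax : ∀ w ∈ σ, w ≤ v)
    (hcard : σ.card = d + 1) :
    Pm F v (sbdry F σ) = ((-1 : F) ^ d) • Finsupp.single (σ.erase v) (1 : F) := by
  unfold sbdry
  rw [map_sum, ← Finset.add_sum_erase _ _ hv]
  have hrest : ∀ w ∈ σ.erase v, Pm F v (((-1 : F) ^ ((σ.filter (fun u => u < w)).card)) •
      Finsupp.single (σ.erase w) (1 : F)) = 0 := by
    intro w hw
    obtain ⟨hwne, hwσ⟩ := Finset.mem_erase.mp hw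
    rw [map_smul, Pm_single, if_pos (Finset.mem_erase.mpr ⟨Ne.symm hwne, hv⟩), smul_zero]
  rw [Finset.sum_eq_zero hrest, add_zero, map_smul, Pm_single,
    if_neg (Finset.notMem_erase v σ)]
  have hfilter : σ.filter (fun u => u < v) = σ.erase v := by
    ext u
    simp only [Finset.mem_filter, Finset.mem_erase]
    constructor
    · rintro ⟨hu, hlt⟩; exact ⟨ne_of_lt hlt, hu⟩
    · rintro ⟨hne, hu⟩; exact ⟨hu, lt_of_le_of_ne (hmax u hu) hne⟩
  rw [hfilter, Finset.card_erase_of_mem hv, hcard]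
  norm_num

lemma rank_ge_card_link (d : ℕ) (B : Finset (Finset V))
    (hB : ∀ σ ∈ B, σ.card = d + 1) (v : V)
    (hmax : ∀ σ ∈ B, ∀ w ∈ σ, w ≤ v) :
    (B.filter (fun σ => v ∈ σ)).card ≤ rankBd F B := by
  classical
  set Bv := B.filter (fun σ => v ∈ σ) with hBv
  set I : Finset (Finset V) := Bv.image (fun σ => σ.erase v) with hI
  have hinj : Set.InjOn (fun σ => σ.erase v) (Bv : Set (Finset V)) := by
    intro σ1 h1 σ2 h2 heq
    have hv1 : v ∈ σ1 := (Finset.mem_filter.mp h1).2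
    have hv2 : v ∈ σ2 := (Finset.mem_filter.mp h2).2
    rw [← Finset.insert_erase hv1, ← Finset.insert_erase hv2]
    simp only at heq
    rw [heq]
  have hcardI : I.card = Bv.card := Finset.card_image_of_injOn hinj
  have hli : LinearIndependent F
      (fun τ : I => Finsupp.single (τ : Finset V) (1 : F)) :=
    (Finsupp.basisSingleOne (R := F) (ι := Finset V)).linearIndependent.comp
      (fun τ : I => (τ : Finset V)) Subtype.val_injective
  have hfr : Module.finrank F (Submodule.span F (Set.range
      (fun τ : I => Finsupp.single (τ : Finset V) (1 : F)))) = I.card := by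
    rw [finrank_span_eq_card hli, Fintype.card_coe]
  set U := Submodule.span F ((fun σ => sbdry F σ) '' (↑B : Set (Finset V))) with hU
  haveI : Module.Finite F U :=
    FiniteDimensional.span_of_finite F (B.finite_toSet.image _)
  set W := Submodule.map (Pm F v) U with hW
  haveI : Module.Finite F W := Module.Finite.map U (Pm F v)
  have hspan_le : Submodule.span F (Set.range
      (fun τ : I => Finsupp.single (τ : Finset V) (1 : F))) ≤ W := by
    rw [Submodule.span_le]
    rintro _ ⟨⟨τ, hτ⟩, rfl⟩
    obtain ⟨σ, hσBv, rfl⟩ := Finset.mem_image.mp hτ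
    have hσB : σ ∈ B := (Finset.mem_filter.mp hσBv).1
    have hvσ : v ∈ σ := (Finset.mem_filter.mp hσBv).2
    have hP : Pm F v (sbdry F σ) = ((-1 : F) ^ d) • Finsupp.single (σ.erase v) (1 : F) :=
      Pm_sbdry_mem F hvσ (hmax σ hσB) (hB σ hσB)
    have hmem : Pm F v (sbdry F σ) ∈ W :=
      Submodule.mem_map_of_mem (Submodule.subset_span ⟨σ, hσB, rfl⟩)
    have heq1 : Finsupp.single (σ.erase v) (1 : F)
        = ((-1 : F) ^ d) • (Pm F v (sbdry F σ)) := by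
      rw [hP, smul_smul, ← pow_add]
      have : (-1 : F) ^ (d + d) = 1 := by
        rw [show d + d = 2 * d from by ring, pow_mul]
        norm_num
      rw [this, one_smul]
    simp only
    rw [heq1]
    exact Submodule.smul_mem _ _ hmem
  calc Bv.card = I.card := hcardI.symm
    _ = Module.finrank F (Submodule.span F (Set.range
        (fun τ : I => Finsupp.single (τ : Finset V) (1 : F)))) := hfr.symm
    _ ≤ Module.finrank F W := Submodule.finrank_mono hspan_le
    _ ≤ Module.finrank F U := Submodule.finrank_map_le (Pm F v) U
    _ = rankBd F B := rfl

lemma rank_aux {M : Type} [AddCommGroup M] [Module F M] (Q : M →ₗ[F] M)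
    (U W0 : Submodule F M) [Module.Finite F U] (hW0U : W0 ≤ U)
    (hW0K : W0 ≤ LinearMap.ker Q) :
    Module.finrank F (Submodule.map Q U) + Module.finrank F W0
      ≤ Module.finrank F U := by
  set g := Q.domRestrict U with hg
  have hrn : Module.finrank F (LinearMap.range g) + Module.finrank F (LinearMap.ker g)
      = Module.finrank F U := LinearMap.finrank_range_add_finrank_ker g
  have hrange : LinearMap.range g = Submodule.map Q U := LinearMap.range_domRestrict U Q
  have hkerle : Submodule.comap U.subtype W0 ≤ LinearMap.ker g := by
    intro x hx
    simp only [Submodule.mem_comap] at hx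
    simp only [hg, LinearMap.mem_ker, LinearMap.domRestrict_apply]
    exact LinearMap.mem_ker.mp (hW0K hx)
  have hker : Module.finrank F W0 ≤ Module.finrank F (LinearMap.ker g) := by
    rw [← (Submodule.comapSubtypeEquivOfLe hW0U).finrank_eq]
    exact Submodule.finrank_mono hkerle
  rw [← hrn, hrange.symm]
  omega

lemma rank_split (d : ℕ) (B : Finset (Finset V))
    (hB : ∀ σ ∈ B, σ.card = d + 1) (v : V)
    (hmax : ∀ σ ∈ B, ∀ w ∈ σ, w ≤ v) :
    rankBd F ((B.filter (fun σ => v ∈ σ)).image (fun σ => σ.erase v))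
      + rankBd F (B.filter (fun σ => v ∉ σ)) ≤ rankBd F B := by
  classical
  set I : Finset (Finset V) := (B.filter (fun σ => v ∈ σ)).image (fun σ => σ.erase v) with hI
  set B0 := B.filter (fun σ => v ∉ σ) with hB0
  set U := Submodule.span F ((fun σ => sbdry F σ) '' (↑B : Set (Finset V))) with hU
  haveI : Module.Finite F U :=
    FiniteDimensional.span_of_finite F (B.finite_toSet.image _)
  set W0 := Submodule.span F ((fun σ => sbdry F σ) '' (↑B0 : Set (Finset V))) with hW0
  have hW0U : W0 ≤ U := Submodule.span_mono
    (Set.image_mono (by exact_mod_cast Finset.filter_subset _ B))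
  have hW0K : W0 ≤ LinearMap.ker (Qm F v) := by
    rw [Submodule.span_le]
    rintro _ ⟨σ, hσ, rfl⟩
    simp only [hB0, Finset.coe_filter, Set.mem_setOf_eq] at hσ
    exact LinearMap.mem_ker.mpr (Qm_sbdry_not_mem F hσ.2)
  have haux := rank_aux F (Qm F v) U W0 hW0U hW0K
  have hrange : Submodule.map (Qm F v) U
      = Submodule.span F ((fun σ => sbdry F σ) '' (↑I : Set (Finset V))) := by
    rw [hU, Submodule.map_span]
    apply le_antisymm
    · rw [Submodule.span_le]
      rintro _ ⟨_, ⟨σ, hσ, rfl⟩, rfl⟩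
      by_cases hvσ : v ∈ σ
      · have heq2 : Qm F v (sbdry F σ) = sbdry F (σ.erase v) := Qm_sbdry_mem F hvσ (hmax σ hσ)
        simp only [heq2]
        apply Submodule.subset_span
        exact ⟨σ.erase v, by
          simp only [hI, Finset.coe_image, Set.mem_image, Finset.mem_coe, Finset.mem_filter]
          exact ⟨σ, ⟨hσ, hvσ⟩, rfl⟩, rfl⟩
      · have heq2 : Qm F v (sbdry F σ) = 0 := Qm_sbdry_not_mem F hvσ
        simp only [heq2]
        exact Submodule.zero_mem _
    · rw [Submodule.span_le]
      rintro _ ⟨τ, hτ, rfl⟩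
      simp only [hI, Finset.coe_image, Set.mem_image, Finset.mem_coe, Finset.mem_filter] at hτ
      obtain ⟨σ, ⟨hσB, hvσ⟩, rfl⟩ := hτ
      apply Submodule.subset_span
      exact ⟨sbdry F σ, ⟨σ, hσB, rfl⟩, Qm_sbdry_mem F hvσ (hmax σ hσB)⟩
  rw [hrange] at haux
  exact haux

end LA'

lemma bk_ge_one (k : ℕ) {t : ℝ} (h : (k:ℝ) ≤ t) : (1:ℝ) ≤ bk k t := by
  have h1 : bk k ((k:ℕ):ℝ) = 1 := bk_self k
  rcases Nat.eq_zero_or_pos k with rfl | hk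
  · rw [bk_zero]
  · calc (1:ℝ) = bk k ((k:ℕ):ℝ) := h1.symm
      _ ≤ bk k t := bk_le_bk hk (by push_cast; linarith) h

lemma le_of_one_le_bk (k : ℕ) (hk : 1 ≤ k) {t : ℝ} (ht : (k:ℝ) - 1 ≤ t)
    (h : (1:ℝ) ≤ bk k t) : (k:ℝ) ≤ t := by
  by_contra hcon
  push_neg at hcon
  have hlt : bk k t < bk k ((k:ℕ):ℝ) := bk_lt_bk hk ht (by exact_mod_cast hcon)
  rw [bk_self] at hlt
  linarith

lemma main_rank (F : Type) [Field F] {V : Type} [LinearOrder V] :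
    ∀ (d n : ℕ) (B : Finset (Finset V)), B.card = n →
      (∀ σ ∈ B, σ.card = d + 1) →
      ∀ x : ℝ, (d : ℝ) ≤ x → (B.card : ℝ) = bk (d+1) (x+1) →
      bk d x ≤ (rankBd F B : ℝ) := by
  intro d
  induction d with
  | zero =>
    intro n B hBn hB x hx hcard
    rw [bk_zero]
    have hm1 : (1:ℝ) ≤ (B.card : ℝ) := by
      rw [hcard]
      exact bk_ge_one 1 (by push_cast; linarith)
    have hBne : B.Nonempty := Finset.card_pos.mp (by exact_mod_cast Nat.one_le_cast.mp hm1)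
    obtain ⟨σ₀, hσ₀⟩ := hBne
    obtain ⟨w, rfl⟩ := Finset.card_eq_one.mp (hB σ₀ hσ₀)
    have hsb : sbdry F {w} = Finsupp.single (∅ : Finset V) (1:F) := by
      unfold sbdry
      rw [Finset.sum_singleton]
      have h1 : ({w} : Finset V).filter (fun u => u < w) = ∅ := by
        apply Finset.filter_eq_empty_iff.mpr
        intro u hu
        rw [Finset.mem_singleton] at hu
        subst hu
        exact lt_irrefl u
      rw [h1, Finset.erase_singleton]
      simp
    set U := Submodule.span F ((fun σ => sbdry F σ) '' (↑B : Set (Finset V))) with hU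
    haveI : Module.Finite F U :=
      FiniteDimensional.span_of_finite F (B.finite_toSet.image _)
    have hne : Finsupp.single (∅ : Finset V) (1:F) ≠ 0 := by
      simp
    have hmem : Finsupp.single (∅ : Finset V) (1:F) ∈ U := by
      apply Submodule.subset_span
      exact ⟨{w}, hσ₀, hsb⟩
    have hpos : 0 < Module.finrank F U := by
      refine (Module.finrank_pos_iff (R := F) (M := U)).mpr ?_
      exact nontrivial_of_ne ⟨_, hmem⟩ 0
        (fun hc => hne (by simpa using congrArg Subtype.val hc))
    have : (1:ℕ) ≤ rankBd F B := hpos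
    exact_mod_cast this
  | succ e ihd =>
    intro n
    induction n using Nat.strong_induction_on with
    | _ n ihn =>
    intro B hBn hB x hx hcard
    classical
    have hx' : ((e:ℕ):ℝ) + 1 ≤ x := by push_cast at hx ⊢; linarith
    have hm1 : (1:ℝ) ≤ (B.card : ℝ) := by
      rw [hcard]
      exact bk_ge_one (e+2) (by push_cast; linarith)
    have hBne : B.Nonempty := Finset.card_pos.mp (by exact_mod_cast Nat.one_le_cast.mp hm1)
    obtain ⟨σ₀, hσ₀⟩ := hBne
    have hσ₀ne : σ₀.Nonempty := Finset.card_pos.mp (by rw [hB σ₀ hσ₀]; omega)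
    have hSne : (B.sup id).Nonempty := hσ₀ne.mono (Finset.le_sup (f := id) hσ₀)
    set v := (B.sup id).max' hSne with hv
    have hmax : ∀ σ ∈ B, ∀ w ∈ σ, w ≤ v := by
      intro σ hσ w hw
      exact (B.sup id).le_max' w (Finset.mem_sup.mpr ⟨σ, hσ, hw⟩)
    obtain ⟨σv, hσv, hvσv⟩ := Finset.mem_sup.mp ((B.sup id).max'_mem hSne)
    set Bv := B.filter (fun σ => v ∈ σ) with hBv
    set B0 := B.filter (fun σ => v ∉ σ) with hB0
    set I : Finset (Finset V) := Bv.image (fun σ => σ.erase v) with hI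
    have ha1 : 1 ≤ Bv.card :=
      Finset.card_pos.mpr ⟨σv, Finset.mem_filter.mpr ⟨hσv, hvσv⟩⟩
    have hab : Bv.card + B0.card = B.card := by
      rw [hBv, hB0]
      exact Finset.card_filter_add_card_filter_not _
    have hrank1 : Bv.card ≤ rankBd F B := rank_ge_card_link F (e+1) B hB v hmax
    rcases le_or_gt (bk (e+1) x) ((Bv.card:ℝ)) with hcase | hcase
    · calc bk (e+1) x ≤ (Bv.card : ℝ) := hcase
        _ ≤ (rankBd F B : ℝ) := by exact_mod_cast hrank1
    · have hpascal : bk (e+2) (x+1) = bk (e+2) x + bk (e+1) x := bk_pascal (e+1) x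
      have hb0R : (B0.card : ℝ) = bk (e+2) (x+1) - (Bv.card:ℝ) := by
        rw [← hcard, ← hab]
        push_cast
        ring
      have hbk2x : 0 ≤ bk (e+2) x := bk_nonneg (by push_cast; linarith)
      have hb0pos : (0:ℝ) < (B0.card : ℝ) := by rw [hb0R]; linarith
      have hb1 : 1 ≤ B0.card := by exact_mod_cast hb0pos
      -- choose y (= ty - 1)
      obtain ⟨ty, hty, htyval⟩ := bk_surj (e+1) (by omega) (s := (Bv.card:ℝ)) (by positivity)
      have ha1R : (1:ℝ) ≤ bk (e+1) ty := by rw [htyval]; exact_mod_cast ha1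
      have hty1 : ((e+1:ℕ):ℝ) ≤ ty := le_of_one_le_bk (e+1) (by omega) hty ha1R
      -- choose z (= tz - 1)
      obtain ⟨tz, htz, htzval⟩ := bk_surj (e+2) (by omega) (s := (B0.card:ℝ)) (by positivity)
      have hb1R : (1:ℝ) ≤ bk (e+2) tz := by rw [htzval]; exact_mod_cast hb1
      have htz1 : ((e+2:ℕ):ℝ) ≤ tz := le_of_one_le_bk (e+2) (by omega) htz hb1R
      -- lemmaN hypotheses
      have hyN : ((e:ℕ):ℝ) ≤ ty - 1 := by push_cast at hty1; linarith
      have hzN : ((e:ℕ):ℝ) ≤ tz - 1 := by push_cast at htz1; linarith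
      have hyx : (ty - 1) + 1 ≤ x := by
        rw [sub_add_cancel]
        by_contra hcon
        push_neg at hcon
        have hle : bk (e+1) x ≤ bk (e+1) ty :=
          bk_le_bk (by omega) (by push_cast; linarith) (le_of_lt hcon)
        rw [htyval] at hle
        linarith
      have heqN : bk (e+1) ((ty-1)+1) + bk (e+2) ((tz-1)+1) = bk (e+2) (x+1) := by
        rw [sub_add_cancel, sub_add_cancel, htyval, htzval, ← hcard, ← hab]
        push_cast
        ring
      have hN := lemmaN e hx' hyN hyx hzN heqN
      -- IH for the link I
      have hinj : Set.InjOn (fun σ => σ.erase v) (Bv : Set (Finset V)) := by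
        intro σ1 h1 σ2 h2 heq
        have hv1 : v ∈ σ1 := (Finset.mem_filter.mp h1).2
        have hv2 : v ∈ σ2 := (Finset.mem_filter.mp h2).2
        rw [← Finset.insert_erase hv1, ← Finset.insert_erase hv2]
        simp only at heq
        rw [heq]
      have hIcard : I.card = Bv.card := Finset.card_image_of_injOn hinj
      have hIB : ∀ τ ∈ I, τ.card = e + 1 := by
        intro τ hτ
        obtain ⟨σ, hσBv, rfl⟩ := Finset.mem_image.mp hτ
        have hσB : σ ∈ B := (Finset.mem_filter.mp hσBv).1
        have hvσ : v ∈ σ := (Finset.mem_filter.mp hσBv).2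
        rw [Finset.card_erase_of_mem hvσ, hB σ hσB]
        omega
      have hlink := ihd I.card I rfl hIB (ty - 1) hyN
        (by rw [sub_add_cancel, hIcard, htyval])
      -- IH for B0
      have hb0lt : B0.card < n := by omega
      have hB0c : ∀ σ ∈ B0, σ.card = (e+1) + 1 := fun σ hσ =>
        hB σ (Finset.filter_subset _ _ hσ)
      have hB0IH := ihn B0.card hb0lt B0 rfl hB0c (tz - 1)
        (by push_cast at htz1 ⊢; linarith)
        (by rw [sub_add_cancel, htzval])
      have hsplit := rank_split F (e+1) B hB v hmax
      calc bk (e+1) x ≤ bk e (ty-1) + bk (e+1) (tz-1) := hN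
        _ ≤ (rankBd F I : ℝ) + (rankBd F B0 : ℝ) := add_le_add hlink hB0IH
        _ ≤ (rankBd F B : ℝ) := by exact_mod_cast hsplit

/-- Kruskal–Katona-type bound on the rank of families of `d`-simplices
(implicit in Balogh–Krueger, via Lovász's form of the Kruskal–Katona theorem):
if `B` is a family of `d`-simplices on a linearly ordered vertex set with
`|B| = binom(x+1, d+1)` for a real number `x ≥ d` (generalized binomial
coefficient), then the rank over a field `F` of the set of boundaries
`{∂σ : σ ∈ B}` is at least `binom(x, d)`. -/
theorem rank_boundaries_ge_binom (F : Type) [Field F] {V : Type} [LinearOrder V]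
    (d : ℕ) (hd : 1 ≤ d) (B : Finset (Finset V)) (hB : ∀ σ ∈ B, σ.card = d + 1)
    (x : ℝ) (hx : (d : ℝ) ≤ x)
    (hcard : (B.card : ℝ) = (descPochhammer ℝ (d + 1)).eval (x + 1) / (Nat.factorial (d + 1) : ℝ)) :
    ((descPochhammer ℝ d).eval x / (Nat.factorial d : ℝ)) ≤ (rankBd F B : ℝ) := by
  exact main_rank F d B.card B rfl hB x hx hcard
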